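/- A monic real polynomial f of degree 3 is the characteristic polynomial of some derivation of the 3-dimensional Heisenberg Lie algebra h₃ if and only if there exist real numbers s and p such that f = (X − s)(X² − sX + p). -/

import Mathlib

set_option linter.unusedTactic false
set_option linter.unnecessarySeqFocus false
set_option linter.unreachableTactic false

open Polynomial

/-- The 3-dimensional Heisenberg Lie algebra `h₃`: the real vector space `Fin 3 → ℝ`
with basis `e₁, e₂, e₃` and only nonzero bracket `⁅e₁, e₂⁆ = e₃`. -/
def H3 : Type := Fin 3 → ℝ

noncomputable instance : AddCommGroup H3 := Pi.addCommGroup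
noncomputable instance : Module ℝ H3 := Pi.module _ _ _
instance : FiniteDimensional ℝ H3 := inferInstanceAs (FiniteDimensional ℝ (Fin 3 → ℝ))

lemma H3.add_apply (x y : H3) (i : Fin 3) : (x + y) i = x i + y i := rfl
lemma H3.smul_apply (r : ℝ) (x : H3) (i : Fin 3) : (r • x) i = r * x i := rfl

noncomputable instance : LieRing H3 :=
  { (inferInstance : AddCommGroup H3) with
    bracket := fun x y => ![0, 0, x 0 * y 1 - x 1 * y 0]
    add_lie := by
      intro x y z
      show (![_,_,_] : Fin 3 → ℝ) = ![_,_,_] + ![_,_,_]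
      funext i
      fin_cases i <;> simp [H3.add_apply] <;> erw [Pi.add_apply] <;> simp <;> ring
    lie_add := by
      intro x y z
      show (![_,_,_] : Fin 3 → ℝ) = ![_,_,_] + ![_,_,_]
      funext i
      fin_cases i <;> simp [H3.add_apply] <;> erw [Pi.add_apply] <;> simp <;> ring
    lie_self := by
      intro x
      show (![_,_,_] : Fin 3 → ℝ) = 0
      funext i
      fin_cases i <;> simp <;> ring
    leibniz_lie := by
      intro x y z
      show (![_,_,_] : Fin 3 → ℝ) = ![_,_,_] + ![_,_,_]
      funext i
      fin_cases i <;> simp [H3.add_apply] <;> erw [Pi.add_apply] <;> simp <;> ring }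

noncomputable instance : LieAlgebra ℝ H3 :=
  { lie_smul := by
      intro r x y
      show (![_,_,_] : Fin 3 → ℝ) = r • ![_,_,_]
      funext i
      fin_cases i <;> simp [H3.smul_apply] <;> erw [Pi.smul_apply] <;> simp <;> ring }

-- auxiliary

lemma H3.bracket_def (x y : H3) : ⁅x, y⁆ = ![0, 0, x 0 * y 1 - x 1 * y 0] := rfl

lemma charpoly_fin3 (M : Matrix (Fin 3) (Fin 3) ℝ) :
    M.charpoly = X^3 - C (M 0 0 + M 1 1 + M 2 2) * X^2
      + C (M 0 0 * M 1 1 + M 0 0 * M 2 2 + M 1 1 * M 2 2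
           - M 0 1 * M 1 0 - M 0 2 * M 2 0 - M 1 2 * M 2 1) * X
      - C (M 0 0 * M 1 1 * M 2 2 - M 0 0 * M 1 2 * M 2 1 - M 0 1 * M 1 0 * M 2 2
           + M 0 1 * M 1 2 * M 2 0 + M 0 2 * M 1 0 * M 2 1 - M 0 2 * M 1 1 * M 2 0) := by
  rw [Matrix.charpoly, Matrix.det_fin_three]
  simp [Matrix.charmatrix_apply, Matrix.diagonal_apply]
  ring

noncomputable def H3basis : Module.Basis (Fin 3) ℝ H3 := Pi.basisFun ℝ (Fin 3)

lemma charpoly_H3 (D : H3 →ₗ[ℝ] H3) :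
    LinearMap.charpoly D =
      (LinearMap.toMatrix H3basis H3basis D).charpoly :=
  (LinearMap.charpoly_toMatrix D H3basis).symm

lemma toMatrix_H3_apply (D : H3 →ₗ[ℝ] H3) (i j : Fin 3) :
    LinearMap.toMatrix H3basis H3basis D i j = D (H3basis j) i := by
  rw [LinearMap.toMatrix_apply]
  exact Pi.basisFun_repr ℝ (Fin 3) (D (H3basis j)) i

lemma H3basis_eq (j : Fin 3) : H3basis j = (Pi.single j 1 : Fin 3 → ℝ) :=
  Pi.basisFun_apply ℝ (Fin 3) j

lemma H3basis0 : H3basis 0 = (![1,0,0] : Fin 3 → ℝ) := by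
  rw [H3basis_eq]; funext i; fin_cases i <;> simp

lemma H3basis1 : H3basis 1 = (![0,1,0] : Fin 3 → ℝ) := by
  rw [H3basis_eq]; funext i; fin_cases i <;> simp

lemma H3basis2 : H3basis 2 = (![0,0,1] : Fin 3 → ℝ) := by
  rw [H3basis_eq]; funext i; fin_cases i <;> simp


lemma H3.sub_apply (x y : H3) (i : Fin 3) : (x - y) i = x i - y i := rfl

noncomputable def Dlin (s p : ℝ) : H3 →ₗ[ℝ] H3 where
  toFun x := ![-p * x 1, x 0 + s * x 1, s * x 2]
  map_add' x y := by
    funext i; fin_cases i <;> simp [H3.add_apply] <;> erw [Pi.add_apply] <;> simp <;> ring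
  map_smul' r x := by
    funext i; fin_cases i <;> simp [H3.smul_apply] <;> erw [Pi.smul_apply] <;> simp <;> ring

lemma Dlin_apply (s p : ℝ) (x : H3) :
    Dlin s p x = ![-p * x 1, x 0 + s * x 1, s * x 2] := rfl

noncomputable def Dder (s p : ℝ) : LieDerivation ℝ H3 H3 :=
  { toLinearMap := Dlin s p
    leibniz' := by
      intro x y
      show Dlin s p ⁅x, y⁆ = ⁅x, Dlin s p y⁆ - ⁅y, Dlin s p x⁆
      rw [H3.bracket_def x y, H3.bracket_def x _, H3.bracket_def y _]
      funext i
      fin_cases i <;>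
        simp [Dlin_apply, H3.sub_apply] <;> erw [Pi.sub_apply, Dlin_apply] <;> simp <;> ring }

/-- A monic real polynomial `f` of degree 3 is the characteristic polynomial of some
derivation of the 3-dimensional Heisenberg Lie algebra `h₃` if and only if
`f = (X - s) * (X² - s*X + p)` for some real numbers `s` and `p`. -/
theorem charpoly_derivation_heisenberg_iff (f : Polynomial ℝ) (hf : f.Monic)
    (hdeg : f.natDegree = 3) :
    (∃ D : LieDerivation ℝ H3 H3, LinearMap.charpoly D.toLinearMap = f) ↔
      ∃ s p : ℝ, f = (X - C s) * (X ^ 2 - C s * X + C p) := by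
  constructor
  · rintro ⟨D, rfl⟩
    set L := D.toLinearMap with hL
    set M := LinearMap.toMatrix H3basis H3basis L with hM
    have hb : (⁅H3basis 0, H3basis 1⁆ : H3) = H3basis 2 := by
      rw [H3.bracket_def, H3basis0, H3basis1, H3basis2]
      norm_num
      rfl
    have hl : L (H3basis 2) = ⁅H3basis 0, L (H3basis 1)⁆ - ⁅H3basis 1, L (H3basis 0)⁆ := by
      rw [← hb]; exact D.leibniz' _ _
    have key : ∀ i : Fin 3, M i 2 =
        (⁅H3basis 0, L (H3basis 1)⁆ - ⁅H3basis 1, L (H3basis 0)⁆ : H3) i := by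
      intro i; rw [hM, toMatrix_H3_apply, hl]
    have h02 : M 0 2 = 0 := by
      rw [key 0, H3.sub_apply, H3.bracket_def, H3.bracket_def]; simp
    have h12 : M 1 2 = 0 := by
      rw [key 1, H3.sub_apply, H3.bracket_def, H3.bracket_def]; simp
    have h22 : M 2 2 = M 0 0 + M 1 1 := by
      rw [key 2, H3.sub_apply, H3.bracket_def, H3.bracket_def, hM,
        toMatrix_H3_apply, toMatrix_H3_apply, H3basis0, H3basis1]
      simp
      ring
    refine ⟨M 0 0 + M 1 1, M 0 0 * M 1 1 - M 0 1 * M 1 0, ?_⟩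
    rw [charpoly_H3, ← hM, charpoly_fin3, h02, h12, h22]
    simp only [map_add, map_mul, map_sub, map_zero, map_one, map_neg]
    ring
  · rintro ⟨s, p, rfl⟩
    refine ⟨Dder s p, ?_⟩
    have hMeq : LinearMap.toMatrix H3basis H3basis (Dder s p).toLinearMap =
        ![![0, -p, 0], ![1, s, 0], ![0, 0, s]] := by
      ext i j
      rw [toMatrix_H3_apply]
      show Dlin s p (H3basis j) i = _
      fin_cases j <;>
        rw [show ∀ k, H3basis k = _ from fun k => H3basis_eq k] <;>
        fin_cases i <;>
        erw [Dlin_apply] <;> simp [Dlin_apply, H3basis0, H3basis1, H3basis2]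
    rw [charpoly_H3, hMeq]; erw [charpoly_fin3]
    simp only [Matrix.cons_val', Matrix.cons_val_zero, Matrix.cons_val_one, Matrix.head_cons,
      Matrix.empty_val', Matrix.cons_val_fin_one, Matrix.head_fin_const, Matrix.cons_val_two,
      Matrix.tail_cons, map_add, map_mul, map_sub, map_zero, map_one, map_neg]
    ring
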